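/- With cylindrical hyperbolic cone metric modification: for the choice φ(δ) = c/δ and ψ(δ) = cδ near δ = 0 (c > 0 constant), the three curvatures K₁₂, K₁₃, K₂₃ of the metric φ²dδ² + sinh²δ dθ² + ψ²dλ² are negative and bounded away from 0 for δ in any interval (0, ε] with ε small, and the volume form φ(δ) sinh δ ψ(δ) dδ dθ dλ has finite integral over (0,ε] × S¹ × S¹. -/

import Mathlib

open MeasureTheory

/-- Sectional curvature `K₁₂` of `φ(δ)²dδ² + sinh²δ dθ² + ψ(δ)²dλ²`. -/
noncomputable def K12 (φ : ℝ → ℝ) (δ : ℝ) : ℝ :=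
  (1 / (φ δ) ^ 2) * (deriv φ δ * (Real.cosh δ / Real.sinh δ) / φ δ - 1)

/-- Sectional curvature `K₁₃`. -/
noncomputable def K13 (φ ψ : ℝ → ℝ) (δ : ℝ) : ℝ :=
  -(1 / (φ δ) ^ 2) * (deriv (deriv ψ) δ / ψ δ - deriv φ δ * deriv ψ δ / (φ δ * ψ δ))

/-- Sectional curvature `K₂₃`. -/
noncomputable def K23 (φ ψ : ℝ → ℝ) (δ : ℝ) : ℝ :=
  -(deriv ψ δ * (Real.cosh δ / Real.sinh δ)) / ((φ δ) ^ 2 * ψ δ)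

/-- `sinh x ≤ x * cosh x` for `x ≥ 0`. -/
lemma sinh_le_mul_cosh {x : ℝ} (hx : 0 ≤ x) : Real.sinh x ≤ x * Real.cosh x := by
  have key : MonotoneOn (fun t : ℝ => t * Real.cosh t - Real.sinh t) (Set.Ici 0) := by
    apply monotoneOn_of_deriv_nonneg (convex_Ici 0)
    · exact ((continuous_id.mul Real.continuous_cosh).sub Real.continuous_sinh).continuousOn
    · intro t _
      exact ((differentiableAt_id.mul Real.differentiable_cosh.differentiableAt).sub
        Real.differentiable_sinh.differentiableAt).differentiableWithinAt
    · intro t ht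
      have ht' : 0 < t := by simpa using ht
      have H : HasDerivAt (fun t : ℝ => t * Real.cosh t - Real.sinh t)
          (1 * Real.cosh t + t * Real.sinh t - Real.cosh t) t :=
        ((hasDerivAt_id t).mul (Real.hasDerivAt_cosh t)).sub (Real.hasDerivAt_sinh t)
      rw [H.deriv]
      have := Real.sinh_nonneg_iff.mpr ht'.le
      nlinarith
  have h0 : (fun t : ℝ => t * Real.cosh t - Real.sinh t) 0 ≤
      (fun t : ℝ => t * Real.cosh t - Real.sinh t) x :=
    key (Set.self_mem_Ici) hx hx
  simp at h0
  linarith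

theorem modified_metric_negatively_curved_finite_volume (c : ℝ) (hc : 0 < c) :
    ∃ ε₀ > 0, ∀ ε : ℝ, 0 < ε → ε ≤ ε₀ →
      (∃ m > 0, ∀ δ ∈ Set.Ioc (0:ℝ) ε,
        K12 (fun s => c / s) δ ≤ -m ∧
        K13 (fun s => c / s) (fun s => c * s) δ ≤ -m ∧
        K23 (fun s => c / s) (fun s => c * s) δ ≤ -m) ∧
      ¬ IntervalIntegrable (fun δ => c / δ) volume 0 ε ∧
      IntervalIntegrable (fun δ => (c / δ) * Real.sinh δ * (c * δ)) volume 0 ε := by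
  refine ⟨1, one_pos, fun ε hε hε1 => ⟨⟨1 / c ^ 2, by positivity, ?_⟩, ?_, ?_⟩⟩
  · intro δ hδ
    obtain ⟨hδ0, hδε⟩ := hδ
    have hs : 0 < Real.sinh δ := Real.sinh_pos_iff.mpr hδ0
    have hch : Real.sinh δ ≤ δ * Real.cosh δ := sinh_le_mul_cosh hδ0.le
    have hφ' : deriv (fun s : ℝ => c / s) δ = -c / δ ^ 2 := by
      have : (fun s : ℝ => c / s) = fun s : ℝ => c * s⁻¹ := by
        funext s; rw [div_eq_mul_inv]
      rw [this, deriv_const_mul_field, deriv_inv]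
      field_simp
    have hψ' : deriv (fun s : ℝ => c * s) = fun _ : ℝ => c := by
      funext x
      rw [deriv_const_mul_field]
      simp
    have hψ'' : deriv (deriv (fun s : ℝ => c * s)) δ = 0 := by
      rw [hψ']; simp
    have key : δ * Real.cosh δ / (c ^ 2 * Real.sinh δ) ≥ 1 / c ^ 2 := by
      rw [ge_iff_le, div_le_div_iff₀ (by positivity) (by positivity)]
      nlinarith
    refine ⟨?_, ?_, ?_⟩
    · show (1 / ((c / δ) ^ 2)) * (deriv (fun s => c / s) δ *
        (Real.cosh δ / Real.sinh δ) / (c / δ) - 1) ≤ -(1 / c ^ 2)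
      rw [hφ']
      have heq : (1 / ((c / δ) ^ 2)) * ((-c / δ ^ 2) *
          (Real.cosh δ / Real.sinh δ) / (c / δ) - 1)
          = -(δ * Real.cosh δ / (c ^ 2 * Real.sinh δ)) - δ ^ 2 / c ^ 2 := by
        field_simp
      rw [heq]
      have h2 : 0 ≤ δ ^ 2 / c ^ 2 := by positivity
      linarith
    · show -(1 / ((c / δ) ^ 2)) * (deriv (deriv (fun s => c * s)) δ / (c * δ) -
        deriv (fun s => c / s) δ * deriv (fun s => c * s) δ / ((c / δ) * (c * δ)))
        ≤ -(1 / c ^ 2)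
      rw [hφ', hψ'', hψ']
      beta_reduce
      have heq : -(1 / ((c / δ) ^ 2)) * ((0 : ℝ) / (c * δ) -
          (-c / δ ^ 2) * c / ((c / δ) * (c * δ))) = -(1 / c ^ 2) := by
        field_simp
        ring
      rw [heq]
    · show -(deriv (fun s => c * s) δ * (Real.cosh δ / Real.sinh δ)) /
        ((c / δ) ^ 2 * (c * δ)) ≤ -(1 / c ^ 2)
      rw [hψ']
      beta_reduce
      have heq : -((c : ℝ) * (Real.cosh δ / Real.sinh δ)) / ((c / δ) ^ 2 * (c * δ))
          = -(δ * Real.cosh δ / (c ^ 2 * Real.sinh δ)) := by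
        field_simp
      rw [heq]
      linarith
  · intro h
    have h2 : IntervalIntegrable (fun δ : ℝ => δ⁻¹) volume 0 ε := by
      have h3 := h.smul c⁻¹
      have : (c⁻¹ • fun δ : ℝ => c / δ) = fun δ : ℝ => δ⁻¹ := by
        funext δ
        rw [Pi.smul_apply, smul_eq_mul, div_eq_mul_inv, ← mul_assoc,
          inv_mul_cancel₀ hc.ne', one_mul]
      rwa [this] at h3
    rw [intervalIntegrable_inv_iff] at h2
    rcases h2 with h2 | h2
    · exact hε.ne h2
    · exact h2 (Set.left_mem_uIcc)
  · have hcont : IntervalIntegrable (fun δ : ℝ => c ^ 2 * Real.sinh δ) volume 0 ε :=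
      ((continuous_const.mul Real.continuous_sinh)).intervalIntegrable 0 ε
    apply hcont.congr
    have hne : ∀ᵐ x ∂(volume.restrict (Set.uIoc (0:ℝ) ε)), x ≠ (0 : ℝ) := by
      refine (ae_restrict_iff' measurableSet_uIoc).mpr ?_
      filter_upwards [] with x hx
      rw [Set.uIoc_of_le hε.le] at hx
      exact ne_of_gt hx.1
    intro x hx
    rw [Set.uIoc_of_le hε.le] at hx
    have hx0 : x ≠ 0 := ne_of_gt hx.1
    show c ^ 2 * Real.sinh x = c / x * Real.sinh x * (c * x)
    rw [show c / x * Real.sinh x * (c * x) = c ^ 2 * Real.sinh x * (x / x) by ring,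
      div_self hx0, mul_one]
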